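/- (Theorem 3) Let n ≥ 2 and let A₁|A₂ be a bipartition of {1,…,n} into two nonempty complementary subsets with |A₁| = n_{A₁} and |A₂| = n_{A₂}. Let ρ be a pure density matrix on (ℂ^d)^{⊗n} that is separable under A₁|A₂, i.e. ρ = ρ_{A₁} ⊗ ρ_{A₂} (up to the corresponding permutation of tensor factors) for density matrices ρ_{A₁} on (ℂ^d)^{⊗n_{A₁}} and ρ_{A₂} on (ℂ^d)^{⊗n_{A₂}}. Then for every k = 1,…,d²−1, ‖T_{A₁|A₂}‖_k ≤ √(2ⁿ(d^{n_{A₁}}−1)(d^{n_{A₂}}−1)/dⁿ). -/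

import Mathlib

open Matrix ComplexOrder

/-- The singular values of a real matrix `M`: square roots of eigenvalues of `Mᴴ * M`. -/
noncomputable def singVals {α β : Type*} [Fintype α] [Fintype β] [DecidableEq β]
    (M : Matrix α β ℝ) : β → ℝ :=
  fun i => Real.sqrt ((Matrix.isHermitian_conjTranspose_mul_self M).eigenvalues i)

/-- The Ky Fan `k`-norm of a real matrix: the sum of its `k` largest singular values
(realized as the largest sum of singular values over index sets of size at most `k`). -/
noncomputable def kyFan {α β : Type*} [Fintype α] [Fintype β] [DecidableEq β]
    (k : ℕ) (M : Matrix α β ℝ) : ℝ :=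
  (Finset.univ.powerset.filter (fun s : Finset β => s.card ≤ k)).sup'
    ⟨∅, by simp⟩ (fun s => ∑ i ∈ s, singVals M i)

/-- Separability of an `n`-partite state (indexed by `Fin n → Fin d`) under the
bipartition `A | Aᶜ`: `ρ` is, up to the permutation of tensor factors, the tensor
product of a density matrix on the factors in `A` and one on the factors not in `A`. -/
def SepUnder {n d : ℕ} (ρ : Matrix (Fin n → Fin d) (Fin n → Fin d) ℂ)
    (A : Finset (Fin n)) : Prop :=
  ∃ (ρA : Matrix ({j // j ∈ A} → Fin d) ({j // j ∈ A} → Fin d) ℂ)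
    (ρB : Matrix ({j // j ∉ A} → Fin d) ({j // j ∉ A} → Fin d) ℂ),
    ρA.PosSemidef ∧ ρA.trace = 1 ∧ ρB.PosSemidef ∧ ρB.trace = 1 ∧
    ∀ v w, ρ v w = ρA (fun j => v j.1) (fun j => w j.1) * ρB (fun j => v j.1) (fun j => w j.1)

/-- The full `n`-body correlation tensor entry `t_{a 0, …, a (n-1)}` of `ρ`,
i.e. `tr (ρ · (λ_{a 0} ⊗ ⋯ ⊗ λ_{a (n-1)}))`. -/
noncomputable def corrFull {n d : ℕ} (lam : Fin (d ^ 2 - 1) → Matrix (Fin d) (Fin d) ℂ)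
    (ρ : Matrix (Fin n → Fin d) (Fin n → Fin d) ℂ) (a : Fin n → Fin (d ^ 2 - 1)) : ℝ :=
  (Matrix.trace (ρ * Matrix.of (fun v w : Fin n → Fin d => ∏ j, lam (a j) (v j) (w j)))).re

section Thm3Aux

variable {d : ℕ}

/-- Tensor product of single-site matrices, as a matrix on the product index. -/
noncomputable def tens {ι : Type*} [Fintype ι] (F : ι → Matrix (Fin d) (Fin d) ℂ) :
    Matrix (ι → Fin d) (ι → Fin d) ℂ :=
  Matrix.of fun v w => ∏ j, F j (v j) (w j)

lemma trace_mul_expand {κ R : Type*} [Fintype κ] [CommRing R] (A B : Matrix κ κ R) :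
    (A * B).trace = ∑ i, ∑ j, A i j * B j i := by
  simp [Matrix.trace, Matrix.mul_apply, Matrix.diag]

lemma tens_isHermitian {ι : Type*} [Fintype ι] {F : ι → Matrix (Fin d) (Fin d) ℂ}
    (h : ∀ j, (F j).IsHermitian) : (tens F).IsHermitian := by
  ext v w
  simp only [tens, conjTranspose_apply, of_apply, star_prod]
  exact Finset.prod_congr rfl fun j _ => (h j).apply _ _

lemma trace_tens {ι : Type*} [Fintype ι] [DecidableEq ι]
    (F : ι → Matrix (Fin d) (Fin d) ℂ) :
    (tens F).trace = ∏ j, (F j).trace := by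
  have : ∀ j : ι, (F j).trace = ∑ x, F j x x := fun j => rfl
  simp only [tens, Matrix.trace, Matrix.diag, of_apply, this]
  rw [Finset.prod_univ_sum, Fintype.piFinset_univ]

lemma trace_tens_mul {ι : Type*} [Fintype ι] [DecidableEq ι]
    (F G : ι → Matrix (Fin d) (Fin d) ℂ) :
    (tens F * tens G).trace = ∏ j, (F j * G j).trace := by
  have h1 : ∀ j : ι, (F j * G j).trace = ∑ x, ∑ y, F j x y * G j y x :=
    fun j => trace_mul_expand _ _
  rw [trace_mul_expand]
  simp only [tens, of_apply, ← Finset.prod_mul_distrib, h1]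
  rw [Finset.prod_univ_sum]
  rw [Fintype.piFinset_univ]
  refine Finset.sum_congr rfl fun v _ => ?_
  rw [Finset.prod_univ_sum, Fintype.piFinset_univ]

lemma im_trace_mul_eq_zero {κ : Type*} [Fintype κ] {A B : Matrix κ κ ℂ}
    (hA : A.IsHermitian) (hB : B.IsHermitian) : ((A * B).trace).im = 0 := by
  have h : (starRingEnd ℂ) ((A * B).trace) = (A * B).trace := by
    have := Matrix.trace_conjTranspose (A * B)
    rw [conjTranspose_mul, hA.eq, hB.eq, trace_mul_comm] at this
    simpa [Complex.star_def] using this.symm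
  exact (Complex.conj_eq_iff_im).mp h

lemma trace_mul_real {κ : Type*} [Fintype κ] {A B : Matrix κ κ ℂ}
    (hA : A.IsHermitian) (hB : B.IsHermitian) :
    (A * B).trace = (((A * B).trace).re : ℂ) := by
  have := im_trace_mul_eq_zero hA hB
  exact (Complex.ext (by simp) (by simp [this])).symm


lemma trace_eq_sum_eigs {𝕜 : Type*} [RCLike 𝕜] {κ : Type*} [Fintype κ] [DecidableEq κ]
    {A : Matrix κ κ 𝕜} (hA : A.IsHermitian) :
    A.trace = ∑ i, (hA.eigenvalues i : 𝕜) := by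
  have hU : star (hA.eigenvectorUnitary : Matrix κ κ 𝕜) * hA.eigenvectorUnitary = 1 :=
    (Matrix.mem_unitaryGroup_iff').mp (hA.eigenvectorUnitary).2
  conv_lhs => rw [hA.spectral_theorem, Unitary.conjStarAlgAut_apply]
  rw [trace_mul_comm, ← mul_assoc, hU, one_mul, trace_diagonal]
  rfl

lemma trace_sq_eq_sum_eigs_sq {𝕜 : Type*} [RCLike 𝕜] {κ : Type*} [Fintype κ] [DecidableEq κ]
    {A : Matrix κ κ 𝕜} (hA : A.IsHermitian) :
    (A * A).trace = ∑ i, (hA.eigenvalues i : 𝕜) ^ 2 := by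
  have hU : star (hA.eigenvectorUnitary : Matrix κ κ 𝕜) * hA.eigenvectorUnitary = 1 :=
    (Matrix.mem_unitaryGroup_iff').mp (hA.eigenvectorUnitary).2
  conv_lhs => rw [hA.spectral_theorem, Unitary.conjStarAlgAut_apply]
  set U : Matrix κ κ 𝕜 := (hA.eigenvectorUnitary : Matrix κ κ 𝕜)
  set Dm : Matrix κ κ 𝕜 := diagonal (RCLike.ofReal ∘ hA.eigenvalues)
  have key : (U * Dm * star U) * (U * Dm * star U) = U * (Dm * Dm) * star U := by
    simp only [mul_assoc]
    rw [← mul_assoc (star U) U, hU]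
    simp [mul_assoc]
  rw [key, trace_mul_comm, ← mul_assoc, hU, one_mul]
  have hDD : Dm * Dm = diagonal (fun i => ((hA.eigenvalues i : 𝕜)) ^ 2) := by
    rw [show Dm = diagonal (fun i => (hA.eigenvalues i : 𝕜)) from rfl, diagonal_mul_diagonal]
    ring_nf
  rw [hDD, trace_diagonal]

/-- For a positive semidefinite matrix of trace one, `tr σ² ≤ 1`. -/
lemma re_trace_sq_le_one {κ : Type*} [Fintype κ] [DecidableEq κ]
    {σ : Matrix κ κ ℂ} (hσ : σ.PosSemidef) (htr : σ.trace = 1) :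
    ((σ * σ).trace).re ≤ 1 := by
  have hH := hσ.1
  have hnn : ∀ i, 0 ≤ hH.eigenvalues i := fun i => hσ.eigenvalues_nonneg i
  have hsum : ∑ i, hH.eigenvalues i = 1 := by
    have := trace_eq_sum_eigs hH
    rw [htr] at this
    have := congrArg Complex.re this
    simpa [← Complex.ofReal_pow] using this.symm
  have hsq : ((σ * σ).trace).re = ∑ i, (hH.eigenvalues i) ^ 2 := by
    have := trace_sq_eq_sum_eigs_sq hH
    have := congrArg Complex.re this
    simpa [← Complex.ofReal_pow] using this
  rw [hsq, ← hsum]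
  refine Finset.sum_le_sum fun i _ => ?_
  have hle : hH.eigenvalues i ≤ 1 := by
    rw [← hsum]
    exact Finset.single_le_sum (fun j _ => hnn j) (Finset.mem_univ i)
  nlinarith [hnn i]


lemma trace_eq_sum_eigs' {κ : Type*} [Fintype κ] [DecidableEq κ]
    {A : Matrix κ κ ℝ} (hA : A.IsHermitian) :
    A.trace = ∑ i, hA.eigenvalues i := by
  have hU : star (hA.eigenvectorUnitary : Matrix κ κ ℝ) * hA.eigenvectorUnitary = 1 :=
    (Matrix.mem_unitaryGroup_iff').mp (hA.eigenvectorUnitary).2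
  conv_lhs => rw [hA.spectral_theorem, Unitary.conjStarAlgAut_apply]
  rw [trace_mul_comm, ← mul_assoc, hU, one_mul, trace_diagonal]
  rfl

lemma sum_singVals_le {α β : Type*} [Fintype α] [Fintype β] [DecidableEq β]
    (M : Matrix α β ℝ) (hr : M.rank ≤ 1) (S : Finset β) :
    ∑ i ∈ S, singVals M i ≤ Real.sqrt ((Mᵀ * M).trace) := by
  classical
  have hH := Matrix.isHermitian_conjTranspose_mul_self M
  have hCT : Mᴴ = Mᵀ := by ext i j; simp [conjTranspose_apply]
  have hPSD : (Mᵀ * M).PosSemidef := by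
    have := Matrix.posSemidef_conjTranspose_mul_self M
    rwa [hCT] at this
  have hnn : ∀ i, 0 ≤ hH.eigenvalues i := fun i => hPSD.eigenvalues_nonneg i
  have htr : (Mᵀ * M).trace = ∑ i, hH.eigenvalues i := by
    rw [← hCT]; exact trace_eq_sum_eigs' hH
  have hbound : ∀ i, singVals M i ≤ Real.sqrt ((Mᵀ * M).trace) := by
    intro i
    rw [htr]
    exact Real.sqrt_le_sqrt (Finset.single_le_sum (fun j _ => hnn j) (Finset.mem_univ i))
  have hcard : Fintype.card {i // hH.eigenvalues i ≠ 0} ≤ 1 := by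
    rw [← hH.rank_eq_card_non_zero_eigs, Matrix.rank_conjTranspose_mul_self]
    exact hr
  by_cases hzero : ∀ i ∈ S, hH.eigenvalues i = 0
  · have hz : ∑ i ∈ S, singVals M i = 0 :=
      Finset.sum_eq_zero fun i hi => by
        rw [show singVals M i = Real.sqrt (hH.eigenvalues i) from rfl, hzero i hi, Real.sqrt_zero]
    rw [hz]; exact Real.sqrt_nonneg _
  · push_neg at hzero
    obtain ⟨i0, hi0S, hi0⟩ := hzero
    have hall : ∀ j, j ≠ i0 → hH.eigenvalues j = 0 := by
      intro j hj
      by_contra hjne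
      have h2 : 1 < Fintype.card {i // hH.eigenvalues i ≠ 0} := by
        rw [Fintype.one_lt_card_iff]
        exact ⟨⟨i0, hi0⟩, ⟨j, hjne⟩, by simp [hj.symm]⟩
      omega
    have hsum : ∑ i ∈ S, singVals M i = singVals M i0 := by
      refine Finset.sum_eq_single i0 (fun j _ hj => by
        rw [show singVals M j = Real.sqrt (hH.eigenvalues j) from rfl, hall j hj, Real.sqrt_zero]) ?_
      intro h; exact absurd hi0S h
    rw [hsum]
    exact hbound i0

lemma kyFan_le {α β : Type*} [Fintype α] [Fintype β] [DecidableEq β]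
    (k : ℕ) (M : Matrix α β ℝ) (hr : M.rank ≤ 1) :
    kyFan k M ≤ Real.sqrt ((Mᵀ * M).trace) := by
  refine Finset.sup'_le _ _ fun s _ => sum_singVals_le M hr s

lemma rank_outer_le_one {α β : Type*} [Fintype α] [Fintype β] [DecidableEq β]
    (u : α → ℝ) (v : β → ℝ) :
    (Matrix.of fun r c => u r * v c : Matrix α β ℝ).rank ≤ 1 := by
  have : (Matrix.of fun r c => u r * v c : Matrix α β ℝ) = Matrix.vecMulVec u v := rfl
  rw [this, Matrix.vecMulVec_eq (Fin 1)]
  refine le_trans (Matrix.rank_mul_le_left _ _) ?_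
  refine le_trans (Matrix.rank_le_card_width _) ?_
  simp

lemma trace_outer {α β : Type*} [Fintype α] [Fintype β] [DecidableEq β]
    (u : α → ℝ) (v : β → ℝ) :
    ((Matrix.of fun r c => u r * v c : Matrix α β ℝ)ᵀ *
      (Matrix.of fun r c => u r * v c)).trace = (∑ r, (u r) ^ 2) * ∑ c, (v c) ^ 2 := by
  simp only [Matrix.trace, Matrix.diag, Matrix.mul_apply, Matrix.transpose_apply, of_apply]
  rw [Finset.sum_comm]
  have h1 : ∀ r : α, ∑ c, u r * v c * (u r * v c) = u r ^ 2 * ∑ c, v c ^ 2 := by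
    intro r
    rw [Finset.mul_sum]
    exact Finset.sum_congr rfl fun c _ => by ring
  simp only [h1]
  rw [← Finset.sum_mul]



noncomputable def emb {κ : Type*} [Fintype κ] (A : Matrix κ κ ℂ) :
    EuclideanSpace ℂ (κ × κ) := WithLp.toLp 2 (fun p : κ × κ => A p.1 p.2)

lemma inner_emb {κ : Type*} [Fintype κ] (A B : Matrix κ κ ℂ) :
    (inner ℂ (emb A) (emb B) : ℂ) = (Aᴴ * B).trace := by
  rw [PiLp.inner_apply]
  simp only [RCLike.inner_apply, emb, PiLp.toLp_apply]
  rw [trace_mul_expand, Finset.sum_comm, Fintype.sum_prod_type]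
  refine Finset.sum_congr rfl fun i _ => Finset.sum_congr rfl fun j _ => ?_
  simp [conjTranspose_apply, mul_comm]


lemma sum_sq_corr_le (hd : 2 ≤ d) (lam : Fin (d ^ 2 - 1) → Matrix (Fin d) (Fin d) ℂ)
    (hherm : ∀ i, (lam i).IsHermitian)
    (htr : ∀ i, (lam i).trace = 0)
    (horth : ∀ i j, (lam i * lam j).trace = if i = j then 2 else 0)
    {ι : Type*} [Fintype ι] [DecidableEq ι] [Nonempty ι]
    (σ : Matrix (ι → Fin d) (ι → Fin d) ℂ) (hσ : σ.PosSemidef) (htrσ : σ.trace = 1) :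
    ∑ a : ι → Fin (d ^ 2 - 1), ((σ * tens fun j => lam (a j)).trace.re) ^ 2
      ≤ (2 : ℝ) ^ (Fintype.card ι) * ((d : ℝ) ^ (Fintype.card ι) - 1)
          / (d : ℝ) ^ (Fintype.card ι) := by
  classical
  set m := Fintype.card ι with hm
  have hd0 : (0 : ℝ) < (d : ℝ) := by
    have : (2 : ℝ) ≤ (d : ℝ) := by exact_mod_cast hd
    linarith
  have hD0 : (0 : ℝ) < (d : ℝ) ^ m := pow_pos hd0 m
  have h20 : (0 : ℝ) < (2 : ℝ) ^ m := by positivity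
  have hMh : ∀ a : ι → Fin (d ^ 2 - 1), (tens fun j => lam (a j)).IsHermitian :=
    fun a => tens_isHermitian fun j => hherm _
  set t : (ι → Fin (d ^ 2 - 1)) → ℝ :=
    fun a => ((σ * tens fun j => lam (a j)).trace.re) with htdef
  have ht : ∀ a, (σ * tens fun j => lam (a j)).trace = ((t a : ℝ) : ℂ) :=
    fun a => trace_mul_real hσ.1 (hMh a)
  have hcard : Fintype.card (ι → Fin d) = d ^ m := by
    rw [Fintype.card_fun, Fintype.card_fin]
  have htr1 : (1 : Matrix (ι → Fin d) (ι → Fin d) ℂ).trace = (((d : ℝ) ^ m : ℝ) : ℂ) := by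
    rw [trace_one, hcard]
    push_cast
    ring
  have htrM : ∀ a : ι → Fin (d ^ 2 - 1), (tens fun j => lam (a j)).trace = 0 := by
    intro a
    rw [trace_tens]
    exact Finset.prod_eq_zero (Finset.mem_univ (Classical.arbitrary ι)) (htr _)
  have htrMM : ∀ a b : ι → Fin (d ^ 2 - 1),
      ((tens fun j => lam (a j)) * tens fun j => lam (b j)).trace
        = if a = b then ((2 : ℂ)) ^ m else 0 := by
    intro a b
    rw [trace_tens_mul]
    by_cases hab : a = b
    · subst hab
      simp only [horth, if_pos rfl, if_true]
      simp [hm, Finset.prod_const]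
    · rw [if_neg hab]
      obtain ⟨j, hj⟩ := Function.ne_iff.mp hab
      refine Finset.prod_eq_zero (Finset.mem_univ j) ?_
      rw [horth, if_neg hj]
  -- the orthonormal family
  set c0 : ℂ := (((Real.sqrt ((d : ℝ) ^ m))⁻¹ : ℝ) : ℂ) with hc0
  set c1 : ℂ := (((Real.sqrt ((2 : ℝ) ^ m))⁻¹ : ℝ) : ℂ) with hc1
  set f : Option (ι → Fin (d ^ 2 - 1)) → EuclideanSpace ℂ ((ι → Fin d) × (ι → Fin d)) :=
    fun o => Option.elim o (c0 • emb 1) (fun a => c1 • emb (tens fun j => lam (a j))) with hf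
  have hsq0 : (Real.sqrt ((d : ℝ) ^ m))⁻¹ * (Real.sqrt ((d : ℝ) ^ m))⁻¹ * ((d : ℝ) ^ m) = 1 := by
    rw [← mul_inv, Real.mul_self_sqrt hD0.le]
    exact inv_mul_cancel₀ hD0.ne'
  have hsq1 : (Real.sqrt ((2 : ℝ) ^ m))⁻¹ * (Real.sqrt ((2 : ℝ) ^ m))⁻¹ * ((2 : ℝ) ^ m) = 1 := by
    rw [← mul_inv, Real.mul_self_sqrt h20.le]
    exact inv_mul_cancel₀ h20.ne'
  have horm : Orthonormal ℂ f := by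
    rw [orthonormal_iff_ite]
    rintro (_ | a) (_ | b)
    · simp only [hf, Option.elim]
      rw [inner_smul_left, inner_smul_right, inner_emb, conjTranspose_one, one_mul, htr1]
      simp only [if_true]
      rw [hc0, Complex.conj_ofReal]
      norm_cast
      rw [← mul_assoc]
      push_cast
      exact hsq0
    · simp only [hf, Option.elim]
      rw [inner_smul_left, inner_smul_right, inner_emb, conjTranspose_one, one_mul, htrM b]
      simp
    · simp only [hf, Option.elim]
      rw [inner_smul_left, inner_smul_right, inner_emb, (hMh a).eq, mul_one, htrM a]
      simp
    · simp only [hf, Option.elim]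
      rw [inner_smul_left, inner_smul_right, inner_emb, (hMh a).eq, htrMM a b]
      by_cases hab : a = b
      · subst hab
        rw [if_pos rfl, if_pos rfl, hc1, Complex.conj_ofReal]
        norm_cast
        rw [← mul_assoc]
        exact_mod_cast hsq1
      · rw [if_neg hab, if_neg (by simpa using hab)]
        simp
  -- Bessel's inequality
  have hb := horm.sum_inner_products_le (𝕜 := ℂ) (emb σ) (s := Finset.univ)
  have hxx : ‖emb σ‖ ^ 2 = ((σ * σ).trace).re := by
    rw [← inner_self_eq_norm_sq (𝕜 := ℂ), inner_emb, hσ.1.eq]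
    rfl
  have hnone : ‖(inner ℂ (f none) (emb σ) : ℂ)‖ ^ 2 = ((d : ℝ) ^ m)⁻¹ := by
    simp only [hf, Option.elim]
    rw [inner_smul_left, inner_emb, conjTranspose_one, one_mul, htrσ, mul_one]
    rw [hc0, Complex.conj_ofReal, Complex.norm_real]
    rw [Real.norm_eq_abs, sq_abs, ← Real.sqrt_inv]
    exact Real.sq_sqrt (by positivity)
  have hsome : ∀ a, ‖(inner ℂ (f (some a)) (emb σ) : ℂ)‖ ^ 2 = ((2 : ℝ) ^ m)⁻¹ * (t a) ^ 2 := by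
    intro a
    simp only [hf, Option.elim]
    rw [inner_smul_left, inner_emb, (hMh a).eq, trace_mul_comm, ht a]
    rw [norm_mul, mul_pow, hc1, Complex.conj_ofReal, Complex.norm_real, Complex.norm_real]
    rw [Real.norm_eq_abs, Real.norm_eq_abs, sq_abs, sq_abs, ← Real.sqrt_inv]
    rw [Real.sq_sqrt (by positivity)]
  rw [Fintype.sum_option] at hb
  rw [hnone] at hb
  simp only [hsome] at hb
  rw [hxx] at hb
  have hb2 : ((d : ℝ) ^ m)⁻¹ + ((2 : ℝ) ^ m)⁻¹ * ∑ a : ι → Fin (d ^ 2 - 1), (t a) ^ 2 ≤ 1 := by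
    rw [Finset.mul_sum]
    exact le_trans hb (re_trace_sq_le_one hσ htrσ)
  have h1 : ((2 : ℝ) ^ m)⁻¹ * ∑ a : ι → Fin (d ^ 2 - 1), (t a) ^ 2
      ≤ 1 - ((d : ℝ) ^ m)⁻¹ := by linarith
  calc ∑ a : ι → Fin (d ^ 2 - 1), (t a) ^ 2
      = (2 : ℝ) ^ m * (((2 : ℝ) ^ m)⁻¹ * ∑ a : ι → Fin (d ^ 2 - 1), (t a) ^ 2) := by
        rw [← mul_assoc, mul_inv_cancel₀ h20.ne', one_mul]
    _ ≤ (2 : ℝ) ^ m * (1 - ((d : ℝ) ^ m)⁻¹) := by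
        exact mul_le_mul_of_nonneg_left h1 h20.le
    _ = (2 : ℝ) ^ m * ((d : ℝ) ^ m - 1) / (d : ℝ) ^ m := by
        field_simp

lemma trace_factor {n : ℕ} (A : Finset (Fin n))
    (lam : Fin (d ^ 2 - 1) → Matrix (Fin d) (Fin d) ℂ)
    (ρ : Matrix (Fin n → Fin d) (Fin n → Fin d) ℂ)
    (ρA : Matrix ({j // j ∈ A} → Fin d) ({j // j ∈ A} → Fin d) ℂ)
    (ρB : Matrix ({j // j ∉ A} → Fin d) ({j // j ∉ A} → Fin d) ℂ)
    (hfact : ∀ v w, ρ v w = ρA (fun j => v j.1) (fun j => w j.1)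
        * ρB (fun j => v j.1) (fun j => w j.1))
    (r : {j // j ∈ A} → Fin (d ^ 2 - 1)) (c : {j // j ∉ A} → Fin (d ^ 2 - 1)) :
    (ρ * Matrix.of (fun v w : Fin n → Fin d =>
        ∏ j, lam (if h : j ∈ A then r ⟨j, h⟩ else c ⟨j, h⟩) (v j) (w j))).trace
      = (ρA * tens fun j => lam (r j)).trace * (ρB * tens fun j => lam (c j)).trace := by
  classical
  have hprod : ∀ v w : Fin n → Fin d,
      (∏ j, lam (if h : j ∈ A then r ⟨j, h⟩ else c ⟨j, h⟩) (w j) (v j))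
        = (∏ j : {j // j ∈ A}, lam (r j) (w j.1) (v j.1))
          * (∏ j : {j // j ∉ A}, lam (c j) (w j.1) (v j.1)) := by
    intro v w
    rw [← Fintype.prod_subtype_mul_prod_subtype (fun j => j ∈ A)
      (fun j => lam (if h : j ∈ A then r ⟨j, h⟩ else c ⟨j, h⟩) (w j) (v j))]
    congr 1
    · refine Finset.prod_congr (by congr!) fun j _ => by rw [dif_pos j.2]
    · refine Finset.prod_congr (by congr!) fun j _ => by rw [dif_neg j.2]
  have hterm : ∀ v w : Fin n → Fin d,
      ρ v w * ∏ j, lam (if h : j ∈ A then r ⟨j, h⟩ else c ⟨j, h⟩) (w j) (v j)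
        = (ρA (fun j => v j.1) (fun j => w j.1)
            * (tens fun j => lam (r j)) (fun j => w j.1) (fun j => v j.1))
          * (ρB (fun j => v j.1) (fun j => w j.1)
            * (tens fun j => lam (c j)) (fun j => w j.1) (fun j => v j.1)) := by
    intro v w
    rw [hfact v w, hprod v w]
    simp only [tens, of_apply]
    ring
  let e := Equiv.piEquivPiSubtypeProd (fun j : Fin n => j ∈ A) (fun _ => Fin d)
  have main : (∑ v, ∑ w, ρ v w
        * ∏ j, lam (if h : j ∈ A then r ⟨j, h⟩ else c ⟨j, h⟩) (w j) (v j))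
      = ∑ p : ({j // j ∈ A} → Fin d) × ({j // j ∉ A} → Fin d),
          ∑ q : ({j // j ∈ A} → Fin d) × ({j // j ∉ A} → Fin d),
          (ρA p.1 q.1 * (tens fun j => lam (r j)) q.1 p.1)
            * (ρB p.2 q.2 * (tens fun j => lam (c j)) q.2 p.2) := by
    refine Fintype.sum_bijective e e.bijective _ _ fun v => ?_
    refine Fintype.sum_bijective e e.bijective _ _ fun w => ?_
    exact hterm v w
  calc (ρ * Matrix.of (fun v w : Fin n → Fin d =>
        ∏ j, lam (if h : j ∈ A then r ⟨j, h⟩ else c ⟨j, h⟩) (v j) (w j))).trace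
      = ∑ v, ∑ w, ρ v w
          * ∏ j, lam (if h : j ∈ A then r ⟨j, h⟩ else c ⟨j, h⟩) (w j) (v j) := by
        rw [trace_mul_expand]
        rfl
    _ = ∑ p : ({j // j ∈ A} → Fin d) × ({j // j ∉ A} → Fin d),
          ∑ q : ({j // j ∈ A} → Fin d) × ({j // j ∉ A} → Fin d),
          (ρA p.1 q.1 * (tens fun j => lam (r j)) q.1 p.1)
            * (ρB p.2 q.2 * (tens fun j => lam (c j)) q.2 p.2) := main
    _ = ∑ pa, ∑ pb, ∑ qa, ∑ qb,
          (ρA pa qa * (tens fun j => lam (r j)) qa pa)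
            * (ρB pb qb * (tens fun j => lam (c j)) qb pb) := by
        rw [Fintype.sum_prod_type]
        exact Finset.sum_congr rfl fun pa _ => Finset.sum_congr rfl fun pb _ => by
          rw [Fintype.sum_prod_type]
    _ = ∑ pa, ∑ pb, (∑ qa, ρA pa qa * (tens fun j => lam (r j)) qa pa)
          * (∑ qb, ρB pb qb * (tens fun j => lam (c j)) qb pb) := by
        refine Finset.sum_congr rfl fun pa _ => Finset.sum_congr rfl fun pb _ => ?_
        rw [Finset.sum_mul_sum]
    _ = (∑ pa, ∑ qa, ρA pa qa * (tens fun j => lam (r j)) qa pa)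
          * (∑ pb, ∑ qb, ρB pb qb * (tens fun j => lam (c j)) qb pb) := by
        rw [Finset.sum_mul_sum]
    _ = (ρA * tens fun j => lam (r j)).trace * (ρB * tens fun j => lam (c j)).trace := by
        rw [trace_mul_expand, trace_mul_expand]


end Thm3Aux

/-- (Theorem 3) If a pure `n`-partite state is separable under the bipartition `A₁|A₂`,
then `‖T_{A₁|A₂}‖_k ≤ √(2ⁿ(d^{n_{A₁}}-1)(d^{n_{A₂}}-1)/dⁿ)` for every `k = 1,…,d²-1`. -/
theorem kyFan_T_bipartition_of_sep (d : ℕ) (hd : 2 ≤ d)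
    (lam : Fin (d ^ 2 - 1) → Matrix (Fin d) (Fin d) ℂ)
    (hherm : ∀ i, (lam i).IsHermitian)
    (htr : ∀ i, (lam i).trace = 0)
    (horth : ∀ i j, (lam i * lam j).trace = if i = j then 2 else 0)
    (n : ℕ) (hn : 2 ≤ n)
    (A : Finset (Fin n)) (hA1 : A.Nonempty) (hA2 : A ≠ Finset.univ)
    (ρ : Matrix (Fin n → Fin d) (Fin n → Fin d) ℂ)
    (hpsd : ρ.PosSemidef) (htrρ : ρ.trace = 1) (hpure : ρ * ρ = ρ)
    (hsep : SepUnder ρ A)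
    (k : ℕ) (hk1 : 1 ≤ k) (hk2 : k ≤ d ^ 2 - 1) :
    kyFan k (Matrix.of fun (r : {j // j ∈ A} → Fin (d ^ 2 - 1))
        (c : {j // j ∉ A} → Fin (d ^ 2 - 1)) =>
        corrFull lam ρ (fun j => if h : j ∈ A then r ⟨j, h⟩ else c ⟨j, h⟩))
      ≤ Real.sqrt (2 ^ n * ((d : ℝ) ^ A.card - 1) * ((d : ℝ) ^ (n - A.card) - 1)
          / (d : ℝ) ^ n) := by
  classical
  obtain ⟨ρA, ρB, hpsdA, htrA, hpsdB, htrB, hfact⟩ := hsep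
  obtain ⟨j0, hj0⟩ := hA1
  haveI : Nonempty {j // j ∈ A} := ⟨⟨j0, hj0⟩⟩
  have hBne : ∃ j : Fin n, j ∉ A := by
    by_contra h
    push_neg at h
    exact hA2 (Finset.eq_univ_iff_forall.mpr h)
  obtain ⟨j1, hj1⟩ := hBne
  haveI : Nonempty {j // j ∉ A} := ⟨⟨j1, hj1⟩⟩
  set u : ({j // j ∈ A} → Fin (d ^ 2 - 1)) → ℝ :=
    fun r => ((ρA * tens fun j => lam (r j)).trace.re) with hu
  set vv : ({j // j ∉ A} → Fin (d ^ 2 - 1)) → ℝ :=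
    fun c => ((ρB * tens fun j => lam (c j)).trace.re) with hvv
  have hMfac : (Matrix.of fun (r : {j // j ∈ A} → Fin (d ^ 2 - 1))
        (c : {j // j ∉ A} → Fin (d ^ 2 - 1)) =>
        corrFull lam ρ (fun j => if h : j ∈ A then r ⟨j, h⟩ else c ⟨j, h⟩))
      = Matrix.of (fun r c => u r * vv c) := by
    ext r c
    simp only [Matrix.of_apply]
    unfold corrFull
    rw [trace_factor A lam ρ ρA ρB hfact r c]
    rw [trace_mul_real hpsdA.1 (tens_isHermitian fun j => hherm _),
        trace_mul_real hpsdB.1 (tens_isHermitian fun j => hherm _)]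
    rw [← Complex.ofReal_mul, Complex.ofReal_re]
  rw [hMfac]
  have h1 := kyFan_le k (Matrix.of (fun r c => u r * vv c)) (rank_outer_le_one u vv)
  refine le_trans h1 ?_
  rw [trace_outer u vv]
  refine Real.sqrt_le_sqrt ?_
  have hmA : Fintype.card {j // j ∈ A} = A.card := Fintype.card_coe A
  have hmB : Fintype.card {j // j ∉ A} = n - A.card := by
    have h := Fintype.card_subtype_compl (fun j : Fin n => j ∈ A)
    rw [Fintype.card_fin] at h
    exact h.trans (by rw [hmA])
  have hBu := sum_sq_corr_le hd lam hherm htr horth ρA hpsdA htrA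
  have hBv := sum_sq_corr_le hd lam hherm htr horth ρB hpsdB htrB
  rw [hmA] at hBu
  rw [hmB] at hBv
  have hBu' : ∑ r, u r ^ 2
      ≤ (2 : ℝ) ^ A.card * ((d : ℝ) ^ A.card - 1) / (d : ℝ) ^ A.card := hBu
  have hBv' : ∑ c, vv c ^ 2
      ≤ (2 : ℝ) ^ (n - A.card) * ((d : ℝ) ^ (n - A.card) - 1) / (d : ℝ) ^ (n - A.card) := hBv
  have hd1 : (1 : ℝ) ≤ (d : ℝ) := by
    have : (2 : ℝ) ≤ (d : ℝ) := by exact_mod_cast hd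
    linarith
  have hd0 : (0 : ℝ) < (d : ℝ) := by linarith
  have hcle : A.card ≤ n := by
    have := Finset.card_le_univ A
    simpa using this
  have hnn : A.card + (n - A.card) = n := Nat.add_sub_cancel' hcle
  have key : ((2 : ℝ) ^ A.card * ((d : ℝ) ^ A.card - 1) / (d : ℝ) ^ A.card)
        * ((2 : ℝ) ^ (n - A.card) * ((d : ℝ) ^ (n - A.card) - 1) / (d : ℝ) ^ (n - A.card))
      = 2 ^ n * ((d : ℝ) ^ A.card - 1) * ((d : ℝ) ^ (n - A.card) - 1) / (d : ℝ) ^ n := by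
    have h2n : (2 : ℝ) ^ n = 2 ^ A.card * 2 ^ (n - A.card) := by rw [← pow_add, hnn]
    have hdn : (d : ℝ) ^ n = (d : ℝ) ^ A.card * (d : ℝ) ^ (n - A.card) := by
      rw [← pow_add, hnn]
    rw [h2n, hdn]
    have ha : ((d : ℝ) ^ A.card) ≠ 0 := by positivity
    have hb : ((d : ℝ) ^ (n - A.card)) ≠ 0 := by positivity
    field_simp
  rw [← key]
  have hvnn : (0 : ℝ) ≤ ∑ c, vv c ^ 2 := Finset.sum_nonneg fun c _ => sq_nonneg _
  have hBu0 : (0 : ℝ) ≤ (2 : ℝ) ^ A.card * ((d : ℝ) ^ A.card - 1) / (d : ℝ) ^ A.card := by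
    have h1p : (1 : ℝ) ≤ (d : ℝ) ^ A.card := one_le_pow₀ hd1
    have h2p : (0 : ℝ) < (d : ℝ) ^ A.card := by positivity
    have := mul_nonneg (pow_nonneg (by norm_num : (0:ℝ) ≤ 2) A.card) (by linarith : (0:ℝ) ≤ (d : ℝ) ^ A.card - 1)
    exact div_nonneg this h2p.le
  exact mul_le_mul hBu' hBv' hvnn hBu0
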